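/- Let V be a finite type, let w : V → V → ℝ≥0∞ be a symmetric weight function, and let v ∈ V. Define the weight function w' on the subtype {x : V // x ≠ v} by w' a b := min (w a b) (w a v + w v b). Then for all s, t in the subtype {x : V // x ≠ v}, the walk distance d_{w'}(s, t) computed in the eliminated graph on {x // x ≠ v} equals the walk distance d_w(s, t) computed in the original graph on V. (Vertex elimination preserves shortest-path distances: replacing a non-terminal vertex v by a clique on its neighbors with weights w(a,v) + w(v,b), keeping only the cheaper of parallel edges, does not change any distance between the remaining vertices; this is the elimination step used in the construction of vertex distance sparsifiers in Lemma 6.1 of the paper.) -/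

import Mathlib

open BigOperators
open scoped ENNReal

/-- The walk distance from `s` to `t` with respect to the symmetric weight function `w`:
the infimum over all walks `s = v₀, v₁, …, v_k = t` of the total weight of the walk. -/
noncomputable def walkDist {V : Type*} (w : V → V → ℝ≥0∞) (s t : V) : ℝ≥0∞ :=
  ⨅ (k : ℕ) (p : Fin (k + 1) → V) (_ : p 0 = s) (_ : p (Fin.last k) = t),
    ∑ i : Fin k, w (p i.castSucc) (p i.succ)

/-- The cost of a walk starting at `a` and continuing through the vertices of `l`. -/
noncomputable def walkCost {V : Type*} (u : V → V → ℝ≥0∞) : V → List V → ℝ≥0∞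
  | _, [] => 0
  | a, b :: l => u a b + walkCost u b l

section aux
variable {V : Type*} (u : V → V → ℝ≥0∞)

lemma walkCost_ofFn (k : ℕ) (p : Fin (k + 1) → V) :
    walkCost u (p 0) (List.ofFn fun i : Fin k => p i.succ)
      = ∑ i : Fin k, u (p i.castSucc) (p i.succ) := by
  induction k with
  | zero => simp [walkCost]
  | succ k ih =>
      have h := ih (fun i => p i.succ)
      simp only [Fin.succ_zero_eq_one] at h
      rw [List.ofFn_succ, Fin.sum_univ_succ]
      simp only [walkCost, Fin.succ_zero_eq_one]
      rw [h]
      simp [← Fin.succ_castSucc]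

lemma exists_fin_walk : ∀ (l : List V) (s : V), ∃ (k : ℕ) (p : Fin (k + 1) → V),
    p 0 = s ∧ (s :: l).getLast? = some (p (Fin.last k)) ∧
    ∑ i : Fin k, u (p i.castSucc) (p i.succ) = walkCost u s l := by
  intro l
  induction l with
  | nil => intro s; exact ⟨0, fun _ => s, rfl, by simp, by simp [walkCost]⟩
  | cons b l ih =>
      intro s
      obtain ⟨k, p, hp0, hlast, hsum⟩ := ih b
      refine ⟨k + 1, Fin.cases s p, by simp, ?_, ?_⟩
      · rw [List.getLast?_cons_cons, hlast, ← Fin.succ_last]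
        simp only [Fin.cases_succ]
      · rw [Fin.sum_univ_succ]
        simp only [Fin.castSucc_zero, Fin.cases_zero, ← Fin.succ_castSucc, Fin.cases_succ,
          hp0, hsum]
        rfl

lemma getLast?_ofFn (k : ℕ) (p : Fin (k + 1) → V) :
    (p 0 :: List.ofFn fun i : Fin k => p i.succ).getLast? = some (p (Fin.last k)) := by
  induction k with
  | zero => simp
  | succ k ih =>
      rw [List.ofFn_succ, List.getLast?_cons_cons]
      have h := ih (fun i => p i.succ)
      simpa [← Fin.succ_last, Fin.succ_zero_eq_one] using h

lemma walkDist_le_walkCost {l : List V} {s t : V} (h : (s :: l).getLast? = some t) :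
    walkDist u s t ≤ walkCost u s l := by
  obtain ⟨k, p, hp0, hlast, hsum⟩ := exists_fin_walk u l s
  rw [h] at hlast
  refine iInf_le_of_le k (iInf_le_of_le p (iInf_le_of_le hp0
    (iInf_le_of_le (Option.some_injective _ hlast).symm ?_)))
  rw [hsum]

lemma walkDist_self (s : V) : walkDist u s s = 0 := by
  refine le_antisymm ?_ zero_le
  simpa [walkCost] using walkDist_le_walkCost u (l := []) (s := s) (t := s) (by simp)

lemma walkDist_prepend (a b c : V) :
    walkDist u a c ≤ u a b + walkDist u b c := by
  conv_rhs => rw [walkDist]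
  rw [ENNReal.add_iInf]; refine le_iInf fun k => ?_
  rw [ENNReal.add_iInf]; refine le_iInf fun p => ?_
  rw [ENNReal.add_iInf]; refine le_iInf fun h0 => ?_
  rw [ENNReal.add_iInf]; refine le_iInf fun hlast => ?_
  have h : ((a : V) :: b :: List.ofFn fun i : Fin k => p i.succ).getLast? = some c := by
    rw [List.getLast?_cons_cons, ← h0, getLast?_ofFn, hlast]
  calc walkDist u a c ≤ walkCost u a (b :: List.ofFn fun i : Fin k => p i.succ) :=
        walkDist_le_walkCost u h
    _ = u a b + ∑ i : Fin k, u (p i.castSucc) (p i.succ) := by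
        simp only [walkCost]
        rw [← h0, walkCost_ofFn]

end aux

theorem vertex_elimination_preserves_distances
    {V : Type*} [Fintype V] (w : V → V → ℝ≥0∞)
    (hsymm : ∀ a b : V, w a b = w b a) (v : V) :
    ∀ s t : {x : V // x ≠ v},
      walkDist (fun a b : {x : V // x ≠ v} =>
          min (w (a : V) (b : V)) (w (a : V) v + w v (b : V))) s t =
        walkDist w (s : V) (t : V) := by
  set w' : {x : V // x ≠ v} → {x : V // x ≠ v} → ℝ≥0∞ :=
    fun a b => min (w (a : V) (b : V)) (w (a : V) v + w v (b : V)) with hw'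
  -- `walkDist w` is bounded by the cost of any `w'`-walk
  have dir2 : ∀ (l : List {x : V // x ≠ v}) (s t : {x : V // x ≠ v}),
      (s :: l).getLast? = some t → walkDist w (s : V) (t : V) ≤ walkCost w' s l := by
    intro l
    induction l with
    | nil =>
        intro s t h
        simp only [List.getLast?_singleton, Option.some.injEq] at h
        subst h
        simp [walkCost, walkDist_self]
    | cons b l ih =>
        intro s t h
        rw [List.getLast?_cons_cons] at h
        have hbt := ih b t h
        have h1 : walkDist w (s : V) (t : V) ≤ w (s : V) (b : V) + walkDist w b t :=
          walkDist_prepend w _ _ _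
        have h2 : walkDist w (s : V) (t : V)
            ≤ (w (s : V) v + w v (b : V)) + walkDist w b t := by
          calc walkDist w (s : V) (t : V) ≤ w (s : V) v + walkDist w v t :=
                walkDist_prepend w _ _ _
            _ ≤ w (s : V) v + (w v (b : V) + walkDist w b t) := by
                gcongr
                exact walkDist_prepend w _ _ _
            _ = (w (s : V) v + w v (b : V)) + walkDist w b t := (add_assoc _ _ _).symm
        have hmin : walkDist w (s : V) (t : V) ≤ w' s b + walkDist w b t := by
          rcases le_total (w (s : V) (b : V)) (w (s : V) v + w v (b : V)) with hc | hc
          · rw [hw']; simp only [min_eq_left hc]; exact h1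
          · rw [hw']; simp only [min_eq_right hc]; exact h2
        calc walkDist w (s : V) (t : V) ≤ w' s b + walkDist w b t := hmin
          _ ≤ w' s b + walkCost w' b l := by gcongr
          _ = walkCost w' s (b :: l) := rfl
  -- `walkDist w'` is bounded by the cost of any `w`-walk between non-`v` vertices
  have dir1 : ∀ (n : ℕ) (l : List V), l.length ≤ n → ∀ (s t : {x : V // x ≠ v}),
      ((s : V) :: l).getLast? = some (t : V) →
      walkDist w' s t ≤ walkCost w (s : V) l := by
    intro n
    induction n with
    | zero =>
        intro l hl s t h
        rw [Nat.le_zero, List.length_eq_zero_iff] at hl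
        subst hl
        simp only [List.getLast?_singleton, Option.some.injEq] at h
        have hst : s = t := Subtype.ext h
        subst hst
        simp [walkCost, walkDist_self]
    | succ n ih =>
        intro l hl s t h
        match l with
        | [] =>
            simp only [List.getLast?_singleton, Option.some.injEq] at h
            have hst : s = t := Subtype.ext h
            subst hst
            simp [walkCost, walkDist_self]
        | b :: l' =>
            rw [List.getLast?_cons_cons] at h
            simp only [List.length_cons, Nat.add_le_add_iff_right] at hl
            by_cases hb : b = v
            · match l' with
              | [] =>
                  simp only [List.getLast?_singleton, Option.some.injEq] at h
                  exact absurd (h ▸ hb) t.2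
              | c :: l'' =>
                  rw [List.getLast?_cons_cons] at h
                  simp only [List.length_cons] at hl
                  by_cases hc : c = v
                  · have hstep := ih (c :: l'') hl s t
                      (by rw [List.getLast?_cons_cons]; exact h)
                    calc walkDist w' s t ≤ walkCost w (s : V) (c :: l'') := hstep
                      _ = w (s : V) c + walkCost w c l'' := rfl
                      _ ≤ w (s : V) b + (w b c + walkCost w c l'') := by
                          rw [hb, hc]; gcongr; exact le_add_self
                      _ = walkCost w (s : V) (b :: c :: l'') := rfl
                  · have hstep := ih l'' (Nat.le_of_succ_le hl) ⟨c, hc⟩ t h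
                    have hedge : walkDist w' s t ≤ w' s ⟨c, hc⟩ + walkDist w' ⟨c, hc⟩ t :=
                      walkDist_prepend w' _ _ _
                    have hwle : w' s ⟨c, hc⟩ ≤ w (s : V) b + w b c := by
                      rw [hb]; exact min_le_right _ _
                    calc walkDist w' s t ≤ w' s ⟨c, hc⟩ + walkDist w' ⟨c, hc⟩ t := hedge
                      _ ≤ (w (s : V) b + w b c) + walkCost w c l'' := by gcongr
                      _ = walkCost w (s : V) (b :: c :: l'') := by
                          simp only [walkCost]; rw [add_assoc]
            · have hstep := ih l' hl ⟨b, hb⟩ t h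
              calc walkDist w' s t ≤ w' s ⟨b, hb⟩ + walkDist w' ⟨b, hb⟩ t :=
                    walkDist_prepend w' _ _ _
                _ ≤ w (s : V) b + walkCost w b l' := by
                    gcongr
                    exact min_le_left _ _
                _ = walkCost w (s : V) (b :: l') := rfl
  intro s t
  apply le_antisymm
  · -- walkDist w' ≤ walkDist w
    conv_rhs => rw [walkDist]
    refine le_iInf fun k => le_iInf fun p => le_iInf fun h0 => le_iInf fun hlast => ?_
    have h : ((s : V) :: List.ofFn fun i : Fin k => p i.succ).getLast? = some (t : V) := by
      rw [← h0, getLast?_ofFn, hlast]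
    calc walkDist w' s t ≤ walkCost w (s : V) (List.ofFn fun i : Fin k => p i.succ) :=
          dir1 _ _ le_rfl s t h
      _ = ∑ i : Fin k, w (p i.castSucc) (p i.succ) := by rw [← h0, walkCost_ofFn]
  · -- walkDist w ≤ walkDist w'
    conv_rhs => rw [walkDist]
    refine le_iInf fun k => le_iInf fun p => le_iInf fun h0 => le_iInf fun hlast => ?_
    have h : (s :: List.ofFn fun i : Fin k => p i.succ).getLast? = some t := by
      rw [← h0, getLast?_ofFn, hlast]
    calc walkDist w (s : V) (t : V)
        ≤ walkCost w' s (List.ofFn fun i : Fin k => p i.succ) := dir2 _ s t h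
      _ = ∑ i : Fin k, w' (p i.castSucc) (p i.succ) := by rw [← h0, walkCost_ofFn]
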